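/- Let v : 𝒪 → ℝ be locally Lipschitz on an open set 𝒪 ⊆ ℝ², let X : [0,T] → 𝒪 be Lipschitz, let t ∈ (0,T) be a point where t ↦ v(X(t)) is differentiable and where lim_{h→0⁺}(X(t) - X(t-h))/h = b for some b ∈ ℝ². Then for every p ∈ D⁺v(X(t)) (the superdifferential of v at X(t)), one has d/dt [e^{-rt} v(X(t))] ≥ e^{-rt}(⟨p, b⟩ - r·v(X(t))). -/

import Mathlib

open Set Filter Metric

/-- Along a Lipschitz trajectory, at a point of differentiability of
`t ↦ v(X(t))` where the left difference quotients of `X` converge to `b`,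
one has `d/dt[e^{-rt} v(X(t))] ≥ e^{-rt}(⟨p, b⟩ - r v(X(t)))` for every `p` in
the superdifferential of `v` at `X(t)`. -/
theorem superdifferential_derivative_lower_bound
    (O : Set (ℝ × ℝ)) (hO : IsOpen O) (r : ℝ) (hr : 0 ≤ r)
    (v : ℝ × ℝ → ℝ)
    (hv : ∀ x ∈ O, ∃ ε > 0, ∃ L : NNReal, LipschitzOnWith L v (ball x ε ∩ O))
    (T : ℝ) (hT : 0 < T) (X : ℝ → ℝ × ℝ) (LX : NNReal)
    (hX : LipschitzOnWith LX X (Icc 0 T))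
    (hrange : ∀ τ ∈ Icc (0:ℝ) T, X τ ∈ O)
    (t : ℝ) (ht : t ∈ Ioo (0:ℝ) T)
    (d₀ : ℝ) (hdiff : HasDerivAt (fun τ => v (X τ)) d₀ t)
    (b : ℝ × ℝ)
    (hleft : Tendsto (fun h : ℝ => h⁻¹ • (X t - X (t - h)))
      (nhdsWithin 0 (Ioi 0)) (nhds b))
    (p : ℝ × ℝ)
    (hp : ∀ ε > 0, ∃ δ > 0, ∀ y ∈ O, ‖y - X t‖ < δ →
      v y - v (X t) - (p.1 * (y - X t).1 + p.2 * (y - X t).2) ≤ ε * ‖y - X t‖) :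
    HasDerivAt (fun τ => Real.exp (-r * τ) * v (X τ))
      (Real.exp (-r * t) * (d₀ - r * v (X t))) t ∧
    Real.exp (-r * t) * (d₀ - r * v (X t)) ≥
      Real.exp (-r * t) * ((p.1 * b.1 + p.2 * b.2) - r * v (X t)) := by
  obtain ⟨ht0, htT⟩ := ht
  have hexp : HasDerivAt (fun τ : ℝ => Real.exp (-r * τ))
      (Real.exp (-r * t) * (-r)) t := by
    have h1 : HasDerivAt (fun τ : ℝ => -r * τ) (-r) t := by
      simpa using (hasDerivAt_id t).const_mul (-r)
    exact h1.exp
  have hder : HasDerivAt (fun τ => Real.exp (-r * τ) * v (X τ))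
      (Real.exp (-r * t) * (d₀ - r * v (X t))) t := by
    exact (hexp.mul hdiff).congr_deriv (by ring)
  refine ⟨hder, ?_⟩
  have hLX : (0:ℝ) ≤ (LX : ℝ) := LX.coe_nonneg
  -- key inequality
  have hkey : p.1 * b.1 + p.2 * b.2 ≤ d₀ := by
    refine le_of_forall_pos_le_add (fun ε hε => ?_)
    set ε' : ℝ := ε / ((LX : ℝ) + 1) with hε'def
    have hε' : 0 < ε' := div_pos hε (by linarith)
    obtain ⟨δ, hδ, hδp⟩ := hp ε' hε'
    -- limit of the function slope along left difference quotients
    have hc : Tendsto (fun h : ℝ => t - h) (nhdsWithin 0 (Ioi 0))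
        (nhdsWithin t {t}ᶜ) := by
      apply tendsto_nhdsWithin_of_tendsto_nhds_of_eventually_within _
      · have : Tendsto (fun h : ℝ => t - h) (nhds (0:ℝ)) (nhds t) := by
          have h0 : Continuous (fun h : ℝ => t - h) := continuous_const.sub continuous_id
          simpa using h0.tendsto (0:ℝ)
        exact this.mono_left nhdsWithin_le_nhds
      · filter_upwards [self_mem_nhdsWithin] with h hh
        simp only [mem_compl_iff, mem_singleton_iff]
        intro hcontra
        have : h = 0 := by linarith [sub_eq_self.mp hcontra]
        exact absurd this (ne_of_gt hh)
    have hslope := (hasDerivAt_iff_tendsto_slope.1 hdiff).comp hc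
    have hf : Tendsto (fun h : ℝ => h⁻¹ * (v (X t) - v (X (t - h))))
        (nhdsWithin 0 (Ioi 0)) (nhds d₀) := by
      refine hslope.congr (fun h => ?_)
      simp only [Function.comp, slope_def_field]
      have h1 : t - h - t = -h := by ring
      rw [h1, div_neg, ← neg_div, neg_sub, div_eq_inv_mul]
    have hφ : Continuous (fun z : ℝ × ℝ => p.1 * z.1 + p.2 * z.2) := by continuity
    have hg : Tendsto (fun h : ℝ => p.1 * (h⁻¹ • (X t - X (t - h))).1 +
        p.2 * (h⁻¹ • (X t - X (t - h))).2) (nhdsWithin 0 (Ioi 0))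
        (nhds (p.1 * b.1 + p.2 * b.2)) := (hφ.tendsto b).comp hleft
    have hlim := hf.sub hg
    have hev : ∀ᶠ h in nhdsWithin (0:ℝ) (Ioi 0),
        -(ε' * (LX : ℝ)) ≤ h⁻¹ * (v (X t) - v (X (t - h))) -
          (p.1 * (h⁻¹ • (X t - X (t - h))).1 + p.2 * (h⁻¹ • (X t - X (t - h))).2) := by
      have hminpos : 0 < min t (δ / ((LX : ℝ) + 1)) := by
        apply lt_min ht0
        positivity
      have hmem : Ioo (0:ℝ) (min t (δ / ((LX : ℝ) + 1))) ∈ nhdsWithin (0:ℝ) (Ioi 0) :=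
        Ioo_mem_nhdsGT_of_mem ⟨le_refl _, hminpos⟩
      filter_upwards [hmem] with h hh
      obtain ⟨hh0, hhlt⟩ := hh
      have hht : h < t := lt_of_lt_of_le hhlt (min_le_left _ _)
      have hhδ : h < δ / ((LX : ℝ) + 1) := lt_of_lt_of_le hhlt (min_le_right _ _)
      have hmem1 : t - h ∈ Icc (0:ℝ) T := ⟨by linarith, by linarith⟩
      have hmem2 : t ∈ Icc (0:ℝ) T := ⟨le_of_lt ht0, le_of_lt htT⟩
      have hnorm : ‖X (t - h) - X t‖ ≤ (LX : ℝ) * h := by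
        have hd := hX.dist_le_mul _ hmem1 _ hmem2
        rw [dist_eq_norm] at hd
        have h2 : dist (t - h) t = h := by
          rw [Real.dist_eq, abs_of_nonpos (by linarith)]; ring
        rw [h2] at hd
        exact hd
      have hnormδ : ‖X (t - h) - X t‖ < δ := by
        have hlt : h * ((LX : ℝ) + 1) < δ := (lt_div_iff₀ (by positivity)).mp hhδ
        nlinarith
      have hA := hδp (X (t - h)) (hrange _ hmem1) hnormδ
      have hn2 : ε' * ‖X (t - h) - X t‖ ≤ ε' * ((LX : ℝ) * h) :=
        mul_le_mul_of_nonneg_left hnorm hε'.le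
      have hA2 : v (X (t - h)) - v (X t) -
          (p.1 * ((X (t - h)).1 - (X t).1) + p.2 * ((X (t - h)).2 - (X t).2)) ≤
          ε' * ((LX : ℝ) * h) := by
        have := hA.trans hn2
        simpa [Prod.fst_sub, Prod.snd_sub] using this
      have hinv : h⁻¹ * h = 1 := inv_mul_cancel₀ (ne_of_gt hh0)
      have hipos : (0:ℝ) ≤ h⁻¹ := inv_nonneg.mpr hh0.le
      have hmul := mul_le_mul_of_nonneg_left hA2 hipos
      have hR : h⁻¹ * (ε' * ((LX : ℝ) * h)) = ε' * (LX : ℝ) := by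
        field_simp
      rw [hR] at hmul
      simp only [Prod.smul_fst, Prod.smul_snd, Prod.fst_sub, Prod.snd_sub, smul_eq_mul]
      linarith [hmul]
    have hfin : -(ε' * (LX : ℝ)) ≤ d₀ - (p.1 * b.1 + p.2 * b.2) :=
      ge_of_tendsto hlim hev
    have hεeq : ε' * ((LX : ℝ) + 1) = ε := div_mul_cancel₀ ε (by positivity)
    nlinarith [hε'.le]
  rw [ge_iff_le]
  have h1 : (p.1 * b.1 + p.2 * b.2) - r * v (X t) ≤ d₀ - r * v (X t) := by linarith
  exact mul_le_mul_of_nonneg_left h1 (Real.exp_pos _).le
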